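/- Let s ≥ 1, ℓ ≥ 0, N ≥ s+1, and let ζ be a primitive (s+1)-st root of unity in ℂ. Set x_i = ζ^{i-1} for 1 ≤ i ≤ s+1 and x_i = 0 for s+2 ≤ i ≤ N. Then for the rectangular partition λ = (((s+1)(ℓ+1))^s), the Schur polynomial satisfies s_λ(x_1, ..., x_N) = 1. -/

import Mathlib

/- STATEMENT 12: For `s ≥ 1`, `ℓ ≥ 0`, `N ≥ s+1`, `ζ` a primitive `(s+1)`-st root of
unity, `x_i = ζ^(i-1)` for `i ≤ s+1` and `x_i = 0` otherwise, the Schur polynomial of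
the rectangular partition `λ = (((s+1)(ℓ+1))^s)` — given by the Jacobi–Trudi
determinant `det(h_{λ_i - i + j})_{1≤i,j≤s}` — evaluates to `1`. -/

open Finset

noncomputable def Eg (σ : Type) [Fintype σ] [DecidableEq σ] (g : σ → ℂ) (m : ℕ) : ℂ :=
  ∑ μ : Sym σ m, (μ.val.map g).prod

theorem Eg_zero (σ : Type) [Fintype σ] [DecidableEq σ] (g : σ → ℂ) : Eg σ g 0 = 1 := by
  simp [Eg, Sym.eq_nil_of_card_zero]

theorem Eg_congr (σ τ : Type) [Fintype σ] [DecidableEq σ] [Fintype τ] [DecidableEq τ]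
    (e : σ ≃ τ) (g : τ → ℂ) (m : ℕ) : Eg σ (g ∘ e) m = Eg τ g m := by
  unfold Eg
  refine Fintype.sum_equiv (Sym.equivCongr e) _ _ fun μ => ?_
  simp [Sym.equivCongr, Multiset.map_map]

theorem Eg_option (σ : Type) [Fintype σ] [DecidableEq σ] (g : Option σ → ℂ) (m : ℕ) :
    Eg (Option σ) g (m+1) = Eg σ (g ∘ some) (m+1) + g none * Eg (Option σ) g m := by
  unfold Eg
  rw [← Equiv.sum_comp (symOptionSuccEquiv (α := σ)).symm
    (fun μ : Sym (Option σ) (m+1) => (μ.val.map g).prod)]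
  rw [Fintype.sum_sum_type]
  rw [add_comm]
  congr 1
  · refine Finset.sum_congr rfl fun μ _ => ?_
    simp [symOptionSuccEquiv, SymOptionSuccEquiv.decode, Multiset.map_map]
  · rw [Finset.mul_sum]
    refine Finset.sum_congr rfl fun μ _ => ?_
    have : (symOptionSuccEquiv (α := σ)).symm (Sum.inl μ) = none ::ₛ μ := rfl
    rw [this]
    have h2 : ((none ::ₛ μ : Sym (Option σ) (m+1)).val) = none ::ₘ μ.val := rfl
    rw [h2, Multiset.map_cons, Multiset.prod_cons]

theorem Eg_fin_succ (n m : ℕ) (g : Fin (n+1) → ℂ) :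
    Eg (Fin (n+1)) g (m+1)
      = Eg (Fin n) (fun i => g i.castSucc) (m+1) + g (Fin.last n) * Eg (Fin (n+1)) g m := by
  have h := Eg_option (Fin n) (g ∘ (finSuccEquivLast (n := n)).symm) m
  have e1 : ∀ k, Eg (Option (Fin n)) (g ∘ (finSuccEquivLast (n := n)).symm) k
      = Eg (Fin (n+1)) g k := fun k => Eg_congr _ _ finSuccEquivLast.symm g k
  rw [e1, e1] at h
  have h3 : ((g ∘ (finSuccEquivLast (n := n)).symm) ∘ some) = fun i => g i.castSucc := by
    funext i; simp
  have h4 : (g ∘ (finSuccEquivLast (n := n)).symm) none = g (Fin.last n) := by simp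
  rw [h3, h4] at h
  exact h

theorem Eg_empty_succ (m : ℕ) (g : Fin 0 → ℂ) : Eg (Fin 0) g (m+1) = 0 := by
  have : IsEmpty (Sym (Fin 0) (m+1)) :=
    ⟨fun μ => by obtain ⟨a, _⟩ := Sym.exists_mem μ; exact a.elim0⟩
  simp [Eg]

theorem Eg_genfun (n : ℕ) (g : Fin n → ℂ) :
    (∏ i : Fin n, (1 - PowerSeries.C (g i) * PowerSeries.X))
      * PowerSeries.mk (fun m => Eg (Fin n) g m) = 1 := by
  induction n with
  | zero =>
    have h1 : PowerSeries.mk (fun m => Eg (Fin 0) g m) = 1 := by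
      ext m
      cases m <;>
        simp [PowerSeries.coeff_mk, PowerSeries.coeff_one, Eg_zero, Eg_empty_succ]
    simp [h1]
  | succ n ih =>
    have step : (1 - PowerSeries.C (g (Fin.last n)) * PowerSeries.X)
        * PowerSeries.mk (fun m => Eg (Fin (n+1)) g m)
        = PowerSeries.mk (fun m => Eg (Fin n) (fun i => g i.castSucc) m) := by
      have expand : ∀ F : PowerSeries ℂ,
          (1 - PowerSeries.C (g (Fin.last n)) * PowerSeries.X) * F
            = F - PowerSeries.C (g (Fin.last n)) * (PowerSeries.X * F) := fun F => by ring
      rw [expand]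
      ext m
      cases m with
      | zero =>
        simp [PowerSeries.coeff_mk, PowerSeries.coeff_zero_X_mul, Eg_zero]
      | succ m =>
        rw [map_sub, PowerSeries.coeff_C_mul, PowerSeries.coeff_succ_X_mul,
          PowerSeries.coeff_mk, PowerSeries.coeff_mk, PowerSeries.coeff_mk,
          Eg_fin_succ]
        ring
    rw [Fin.prod_univ_castSucc, mul_assoc, step, ih (fun i => g i.castSucc)]

theorem ind_inv (n : ℕ) (hn : 0 < n) :
    (1 - PowerSeries.X ^ n) * PowerSeries.mk (fun m => if n ∣ m then (1:ℂ) else 0) = 1 := by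
  ext m
  rw [sub_mul, one_mul, map_sub, PowerSeries.coeff_X_pow_mul', PowerSeries.coeff_mk,
    PowerSeries.coeff_one]
  by_cases hm : n ≤ m
  · have hm0 : m ≠ 0 := by omega
    have hdvd : n ∣ m ↔ n ∣ m - n := by
      constructor
      · exact fun h => Nat.dvd_sub h dvd_rfl
      · intro h
        have : m = (m - n) + n := by omega
        rw [this]; exact Nat.dvd_add h dvd_rfl
    rw [if_pos hm, PowerSeries.coeff_mk, if_neg hm0]
    by_cases h : n ∣ m
    · rw [if_pos h, if_pos (hdvd.mp h)]; ring
    · rw [if_neg h, if_neg (fun hc => h (hdvd.mpr hc))]; ring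
  · rw [if_neg hm, sub_zero]
    by_cases h0 : m = 0
    · subst h0; simp
    · rw [if_neg h0, if_neg (fun hc => h0 (Nat.eq_zero_of_dvd_of_lt hc (by omega)))]


theorem prod_one_sub_pow (s : ℕ) (ζ : ℂ) (hζ : IsPrimitiveRoot ζ (s+1)) (t : ℂ) :
    ∏ k ∈ Finset.range (s+1), (1 - ζ ^ k * t) = 1 - t ^ (s+1) := by
  have hroots : ∀ y : ℂ, y ^ (s+1) - 1 = ∏ k ∈ Finset.range (s+1), (y - ζ ^ k) := by
    intro y
    have h1 := Polynomial.X_pow_sub_one_eq_prod (R := ℂ) (n := s+1) (Nat.succ_pos s) hζ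
    have h2 := congrArg (Polynomial.eval y) h1
    simp only [Polynomial.eval_sub, Polynomial.eval_pow, Polynomial.eval_X,
      Polynomial.eval_one, Polynomial.eval_prod, Polynomial.eval_sub, Polynomial.eval_C] at h2
    rw [h2]
    refine (Finset.prod_bij (fun k _ => ζ ^ k) ?_ ?_ ?_ ?_).symm
    · intro k hk
      exact (Polynomial.mem_nthRootsFinset (Nat.succ_pos s) 1).2
        (by rw [← pow_mul, mul_comm, pow_mul, hζ.pow_eq_one, one_pow])
    · intro a ha b hb hab
      exact hζ.pow_inj (Finset.mem_range.mp ha) (Finset.mem_range.mp hb) hab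
    · intro μ hμ
      obtain ⟨i, hi, hpow⟩ := hζ.eq_pow_of_pow_eq_one
        ((Polynomial.mem_nthRootsFinset (Nat.succ_pos s) 1).mp hμ)
      exact ⟨i, Finset.mem_range.mpr hi, hpow⟩
    · intro k hk; rfl
  by_cases ht : t = 0
  · subst ht; simp
  · have key : ∀ k ∈ Finset.range (s+1), (1 - ζ ^ k * t) = t * (t⁻¹ - ζ ^ k) := by
      intro k _
      rw [mul_sub, mul_inv_cancel₀ ht]; ring
    rw [Finset.prod_congr rfl key, Finset.prod_mul_distrib, Finset.prod_const,
      Finset.card_range, ← hroots t⁻¹, mul_sub, ← mul_pow, mul_inv_cancel₀ ht, one_pow, mul_one]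

theorem prod_ps (s : ℕ) (ζ : ℂ) (hζ : IsPrimitiveRoot ζ (s+1)) :
    ∏ i : Fin (s+1), (1 - PowerSeries.C (ζ ^ (i : ℕ)) * PowerSeries.X)
      = 1 - PowerSeries.X ^ (s+1) := by
  have hpoly : ∏ k ∈ Finset.range (s+1), (1 - Polynomial.C (ζ ^ k) * Polynomial.X)
      = 1 - Polynomial.X ^ (s+1) := by
    apply Polynomial.funext
    intro t
    simp only [Polynomial.eval_prod, Polynomial.eval_sub, Polynomial.eval_one,
      Polynomial.eval_mul, Polynomial.eval_C, Polynomial.eval_X, Polynomial.eval_pow]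
    exact prod_one_sub_pow s ζ hζ t
  have := congrArg (Polynomial.coeToPowerSeries.ringHom (R := ℂ)) hpoly
  rw [map_prod, map_sub, map_pow, map_one] at this
  simp only [Polynomial.coeToPowerSeries.ringHom_apply, map_sub, map_one, map_mul,
    Polynomial.coe_C, Polynomial.coe_X] at this
  rw [Fin.prod_univ_eq_prod_range (fun k => 1 - PowerSeries.C (ζ ^ k) * PowerSeries.X)]
  convert this using 2

theorem Eg_ind (s : ℕ) (ζ : ℂ) (hζ : IsPrimitiveRoot ζ (s+1)) (m : ℕ) :
    Eg (Fin (s+1)) (fun i => ζ ^ (i : ℕ)) m = if (s+1) ∣ m then 1 else 0 := by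
  have hA := Eg_genfun (s+1) (fun i => ζ ^ (i : ℕ))
  rw [prod_ps s ζ hζ] at hA
  have hB := ind_inv (s+1) (Nat.succ_pos s)
  have hFG : PowerSeries.mk (fun m => Eg (Fin (s+1)) (fun i => ζ ^ (i : ℕ)) m)
      = PowerSeries.mk (fun m => if (s+1) ∣ m then (1:ℂ) else 0) := by
    calc PowerSeries.mk (fun m => Eg (Fin (s+1)) (fun i => ζ ^ (i : ℕ)) m)
        = ((1 - PowerSeries.X ^ (s+1)) * PowerSeries.mk (fun m => if (s+1) ∣ m then (1:ℂ) else 0))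
          * PowerSeries.mk (fun m => Eg (Fin (s+1)) (fun i => ζ ^ (i : ℕ)) m) := by
          rw [hB, one_mul]
      _ = PowerSeries.mk (fun m => if (s+1) ∣ m then (1:ℂ) else 0)
          * ((1 - PowerSeries.X ^ (s+1))
            * PowerSeries.mk (fun m => Eg (Fin (s+1)) (fun i => ζ ^ (i : ℕ)) m)) := by ring
      _ = PowerSeries.mk (fun m => if (s+1) ∣ m then (1:ℂ) else 0) := by rw [hA, mul_one]
  have := congrArg (PowerSeries.coeff m) hFG
  rwa [PowerSeries.coeff_mk, PowerSeries.coeff_mk] at this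

theorem Eg_pad (s : ℕ) (ζ : ℂ) (d m : ℕ) :
    Eg (Fin (s+1+d)) (fun i => if (i : ℕ) < s+1 then ζ ^ (i : ℕ) else 0) m
      = Eg (Fin (s+1)) (fun i => ζ ^ (i : ℕ)) m := by
  induction d with
  | zero =>
    congr 1
    funext i
    rw [if_pos i.isLt]
  | succ d ih =>
    cases m with
    | zero => rw [Eg_zero, Eg_zero]
    | succ m =>
      have hstep := Eg_fin_succ (s+1+d) m
        (fun i : Fin (s+1+d+1) => if (i : ℕ) < s+1 then ζ ^ (i : ℕ) else 0)
      have hlast : ((Fin.last (s+1+d) : ℕ)) = s+1+d := rfl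
      show Eg (Fin (s+1+d+1)) (fun i => if (i : ℕ) < s+1 then ζ ^ (i : ℕ) else 0) (m+1)
        = Eg (Fin (s+1)) (fun i => ζ ^ (i : ℕ)) (m+1)
      rw [hstep]
      have h0 : (if ((Fin.last (s+1+d) : Fin (s+1+d+1)) : ℕ) < s+1 then ζ ^ ((Fin.last (s+1+d) : Fin (s+1+d+1)) : ℕ) else 0) = 0 := by
        rw [if_neg]; rw [hlast]; omega
      rw [h0, zero_mul, add_zero]
      have hcomp : (fun i : Fin (s+1+d) =>
          if ((i.castSucc : Fin (s+1+d+1)) : ℕ) < s+1 then ζ ^ ((i.castSucc : Fin (s+1+d+1)) : ℕ) else 0)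
          = (fun i : Fin (s+1+d) => if (i : ℕ) < s+1 then ζ ^ (i : ℕ) else 0) := by
        funext i; rfl
      rw [hcomp]
      exact ih

theorem eval_hsymm_eq (N m : ℕ) (x : Fin N → ℂ) :
    MvPolynomial.eval x (MvPolynomial.hsymm (Fin N) ℂ m) = Eg (Fin N) x m := by
  unfold MvPolynomial.hsymm Eg
  rw [map_sum]
  refine Finset.sum_congr rfl fun μ _ => ?_
  rw [map_multiset_prod, Multiset.map_map]
  simp

theorem schur_rectangular_at_roots_of_unity (s ℓ N : ℕ) (hs : 1 ≤ s) (hN : s + 1 ≤ N)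
    (ζ : ℂ) (hζ : IsPrimitiveRoot ζ (s + 1)) :
    Matrix.det (Matrix.of fun i j : Fin s =>
        MvPolynomial.eval (fun t : Fin N => if (t : ℕ) < s + 1 then ζ ^ (t : ℕ) else 0)
          (MvPolynomial.hsymm (Fin N) ℂ ((s + 1) * (ℓ + 1) + (j : ℕ) - (i : ℕ))))
      = 1 := by
  obtain ⟨d, rfl⟩ : ∃ d, N = s + 1 + d := ⟨N - (s+1), by omega⟩
  have hmat : (Matrix.of fun i j : Fin s =>
      MvPolynomial.eval (fun t : Fin (s+1+d) => if (t : ℕ) < s + 1 then ζ ^ (t : ℕ) else 0)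
        (MvPolynomial.hsymm (Fin (s+1+d)) ℂ ((s + 1) * (ℓ + 1) + (j : ℕ) - (i : ℕ))))
      = (1 : Matrix (Fin s) (Fin s) ℂ) := by
    ext i j
    rw [Matrix.of_apply, eval_hsymm_eq, Eg_pad, Eg_ind s ζ hζ, Matrix.one_apply]
    have hij : (s+1) ∣ ((s + 1) * (ℓ + 1) + (j : ℕ) - (i : ℕ)) ↔ i = j := by
      constructor
      · intro h
        obtain ⟨t, ht⟩ := h
        have hle : (i : ℕ) ≤ (s + 1) * (ℓ + 1) + (j : ℕ) := by
          have : s + 1 ≤ (s+1) * (ℓ+1) := Nat.le_mul_of_pos_right _ (by omega)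
          omega
        have heq : (s+1) * t + (i : ℕ) = (s + 1) * (ℓ + 1) + (j : ℕ) := by omega
        have hmod : (i : ℕ) % (s+1) = (j : ℕ) % (s+1) := by
          calc (i : ℕ) % (s+1) = ((s+1) * t + (i : ℕ)) % (s+1) := (Nat.mul_add_mod _ _ _).symm
            _ = ((s+1) * (ℓ+1) + (j : ℕ)) % (s+1) := by rw [heq]
            _ = (j : ℕ) % (s+1) := Nat.mul_add_mod _ _ _
        have hi : (i : ℕ) % (s+1) = (i : ℕ) := Nat.mod_eq_of_lt (by omega)
        have hj : (j : ℕ) % (s+1) = (j : ℕ) := Nat.mod_eq_of_lt (by omega)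
        exact Fin.ext (by omega)
      · rintro rfl
        have : (s + 1) * (ℓ + 1) + (i : ℕ) - (i : ℕ) = (s+1) * (ℓ+1) := by omega
        rw [this]
        exact Dvd.intro _ rfl
    rw [if_congr hij rfl rfl]
  rw [hmat, Matrix.det_one]
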